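/- arXiv:1905.11343 — 3 statements merged into one kernel-verified Lean document; each statement's English description precedes it below -/
import Mathlib

section
/- The function g_∞(v) = 2 / (π D [1 + ((v − V)/D)²]²), with D > 0 and V ∈ ℝ, is a probability density on ℝ with mean V and variance D². -/
open MeasureTheory Real Filter

private lemma aux_quot_tendsto_top :
    Tendsto (fun x : ℝ => x / (1 + x ^ 2)) atTop (nhds 0) := by
  apply squeeze_zero' (Eventually.mono (eventually_gt_atTop 0) fun x hx => by positivity)
    (Eventually.mono (eventually_gt_atTop 0) fun x hx => ?_) tendsto_inv_atTop_zero
  rw [div_le_iff₀ (by positivity), inv_mul_eq_div, le_div_iff₀ hx]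
  nlinarith

private lemma aux_quot_tendsto_bot :
    Tendsto (fun x : ℝ => x / (1 + x ^ 2)) atBot (nhds 0) := by
  have h := (aux_quot_tendsto_top.comp tendsto_neg_atBot_atTop).neg
  simp only [Function.comp_def, neg_zero] at h
  convert h using 2 with x
  rw [neg_div, neg_neg, neg_pow]
  ring_nf

private lemma aux_sq_tendsto_top :
    Tendsto (fun x : ℝ => 1 + x ^ 2) atTop atTop :=
  tendsto_atTop_add_const_left _ 1 (tendsto_pow_atTop two_ne_zero)

private lemma aux_sq_tendsto_bot :
    Tendsto (fun x : ℝ => 1 + x ^ 2) atBot atTop := by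
  have h := aux_sq_tendsto_top.comp tendsto_neg_atBot_atTop
  simpa [Function.comp_def] using h

private lemma aux_quot_deriv (u : ℝ) :
    HasDerivAt (fun u : ℝ => u / (1 + u ^ 2)) ((1 - u ^ 2) / (1 + u ^ 2) ^ 2) u := by
  have h1 : HasDerivAt (fun u : ℝ => 1 + u ^ 2) (2 * u) u := by
    simpa using ((hasDerivAt_pow 2 u).const_add 1)
  have h2 := (hasDerivAt_id u).div h1 (by positivity)
  refine h2.congr_deriv ?_
  show (1 * (1 + u ^ 2) - u * (2 * u)) / (1 + u ^ 2) ^ 2 = (1 - u ^ 2) / (1 + u ^ 2) ^ 2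
  ring

private lemma aux_inv_deriv (u : ℝ) :
    HasDerivAt (fun u : ℝ => (1 + u ^ 2)⁻¹) (-(2 * u) / (1 + u ^ 2) ^ 2) u := by
  have h1 : HasDerivAt (fun u : ℝ => 1 + u ^ 2) (2 * u) u := by
    simpa using ((hasDerivAt_pow 2 u).const_add 1)
  exact h1.inv (by positivity)


private lemma aux_b1 {D : ℝ} (hD : 0 < D) (u : ℝ) :
    2 / (π * D * (1 + u ^ 2) ^ 2) ≤ 2 / (π * D) * (1 + u ^ 2)⁻¹ := by
  have h1 : (0:ℝ) < 1 + u ^ 2 := by positivity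
  have hπ : (0:ℝ) < π := pi_pos
  rw [show 2 / (π * D) * (1 + u ^ 2)⁻¹ = 2 / (π * D * (1 + u ^ 2)) by field_simp]
  gcongr
  nlinarith [mul_nonneg (mul_nonneg (mul_pos pi_pos hD).le h1.le) (sq_nonneg u)]

private lemma aux_b2 {D : ℝ} (hD : 0 < D) (u : ℝ) :
    |D * u| * (2 / (π * D * (1 + u ^ 2) ^ 2)) ≤ 2 / π * (1 + u ^ 2)⁻¹ := by
  have h1 : (0:ℝ) < 1 + u ^ 2 := by positivity
  have hπ : (0:ℝ) < π := pi_pos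
  have habs : |u| ≤ 1 + u ^ 2 := by nlinarith [sq_abs u, abs_nonneg u]
  rw [abs_mul, abs_of_pos hD]
  calc D * |u| * (2 / (π * D * (1 + u ^ 2) ^ 2))
      ≤ D * (1 + u ^ 2) * (2 / (π * D * (1 + u ^ 2) ^ 2)) :=
        mul_le_mul_of_nonneg_right (mul_le_mul_of_nonneg_left habs hD.le) (by positivity)
    _ = 2 / π * (1 + u ^ 2)⁻¹ := by field_simp

private lemma aux_b3 {D : ℝ} (hD : 0 < D) (u : ℝ) :
    (D * u) ^ 2 * (2 / (π * D * (1 + u ^ 2) ^ 2)) ≤ 2 * D / π * (1 + u ^ 2)⁻¹ := by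
  have h1 : (0:ℝ) < 1 + u ^ 2 := by positivity
  have hπ : (0:ℝ) < π := pi_pos
  have hsq : u ^ 2 ≤ 1 + u ^ 2 := by nlinarith
  calc (D * u) ^ 2 * (2 / (π * D * (1 + u ^ 2) ^ 2))
      = D ^ 2 * u ^ 2 * (2 / (π * D * (1 + u ^ 2) ^ 2)) := by ring
    _ ≤ D ^ 2 * (1 + u ^ 2) * (2 / (π * D * (1 + u ^ 2) ^ 2)) :=
        mul_le_mul_of_nonneg_right (mul_le_mul_of_nonneg_left hsq (by positivity)) (by positivity)
    _ = 2 * D / π * (1 + u ^ 2)⁻¹ := by field_simp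


/-- g_∞(v) = 2/(πD[1+((v−V)/D)²]²) is a probability density with mean V and
variance D². -/
theorem stmt_9
    (V D : ℝ) (hD : 0 < D)
    (g : ℝ → ℝ)
    (hg : ∀ v, g v = 2 / (π * D * (1 + ((v - V) / D) ^ 2) ^ 2)) :
    (∀ v, 0 ≤ g v) ∧
    Integrable g ∧
    (∫ v, g v = 1) ∧
    (∫ v, v * g v = V) ∧
    (∫ v, (v - V) ^ 2 * g v = D ^ 2) := by
  have hD' : D ≠ 0 := hD.ne'
  have hπ : (0:ℝ) < π := pi_pos
  have hden : ∀ v : ℝ, (0:ℝ) < 1 + ((v - V) / D) ^ 2 := fun v => by positivity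
  have he : ∀ v : ℝ, v - V = D * ((v - V) / D) := fun v => by field_simp
  have hbint : Integrable (fun v : ℝ => (1 + ((v - V) / D) ^ 2)⁻¹) := by
    have h1 : Integrable (fun x : ℝ => (1 + (x / D) ^ 2)⁻¹) :=
      integrable_inv_one_add_sq.comp_div hD'
    simpa using h1.comp_sub_right V
  have hgc : Continuous g := by
    have : g = fun v => 2 / (π * D * (1 + ((v - V) / D) ^ 2) ^ 2) := funext hg
    rw [this]
    exact continuous_const.div (by fun_prop) fun v => by positivity
  have hg0 : ∀ v, 0 ≤ g v := fun v => by rw [hg]; positivity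
  have hgint : Integrable g := by
    apply Integrable.mono' (hbint.const_mul (2 / (π * D))) hgc.aestronglyMeasurable
    filter_upwards with v
    rw [Real.norm_eq_abs, abs_of_nonneg (hg0 v), hg v]
    exact aux_b1 hD _
  have hvint : Integrable (fun v => (v - V) * g v) := by
    apply Integrable.mono' (hbint.const_mul (2 / π))
      (((continuous_sub_right V).mul hgc).aestronglyMeasurable)
    filter_upwards with v
    show ‖(v - V) * g v‖ ≤ _
    rw [Real.norm_eq_abs, abs_mul, abs_of_nonneg (hg0 v)]
    nth_rewrite 1 [he v]
    rw [hg v]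
    exact aux_b2 hD _
  have hv2int : Integrable (fun v => (v - V) ^ 2 * g v) := by
    apply Integrable.mono' (hbint.const_mul (2 * D / π))
      ((((continuous_sub_right V).pow 2).mul hgc).aestronglyMeasurable)
    filter_upwards with v
    show ‖(v - V) ^ 2 * g v‖ ≤ _
    rw [Real.norm_eq_abs, abs_mul, abs_of_nonneg (hg0 v), abs_of_nonneg (sq_nonneg (v - V))]
    nth_rewrite 1 [he v]
    rw [hg v]
    exact aux_b3 hD _
  have hD' : D ≠ 0 := hD.ne'
  have hπ : (0:ℝ) < π := pi_pos
  have hπ' : π ≠ 0 := hπ.ne'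
  -- derivative of v ↦ (v - V)/D
  have hu : ∀ v : ℝ, HasDerivAt (fun v => (v - V) / D) (1 / D) v := fun v => by
    simpa using ((hasDerivAt_id v).sub_const V).div_const D
  have hden : ∀ v : ℝ, (0:ℝ) < 1 + ((v - V) / D) ^ 2 := fun v => by positivity
  -- tendsto of u
  have hwtop : Tendsto (fun v : ℝ => (v - V) / D) atTop atTop := by
    apply Tendsto.atTop_div_const hD
    simpa [sub_eq_add_neg] using tendsto_atTop_add_const_right atTop (-V) tendsto_id
  have hwbot : Tendsto (fun v : ℝ => (v - V) / D) atBot atBot := by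
    apply Tendsto.atBot_div_const hD
    simpa [sub_eq_add_neg] using tendsto_atBot_add_const_right atBot (-V) tendsto_id
  have hat : Tendsto arctan atTop (nhds (π/2)) :=
    tendsto_nhds_of_tendsto_nhdsWithin tendsto_arctan_atTop
  have hab : Tendsto arctan atBot (nhds (-(π/2))) :=
    tendsto_nhds_of_tendsto_nhdsWithin tendsto_arctan_atBot
  -- ∫ g = 1
  have hF1 : ∀ v : ℝ, HasDerivAt
      (fun v => (1/π) * ((v - V)/D / (1 + ((v - V)/D) ^ 2) + arctan ((v - V)/D))) (g v) v := by
    intro v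
    have h := (((aux_quot_deriv ((v - V)/D)).comp v (hu v)).add
      ((Real.hasDerivAt_arctan ((v - V)/D)).comp v (hu v))).const_mul (1/π)
    refine h.congr_deriv ?_
    rw [hg v]
    have := hden v
    field_simp
    ring
  have hT1 : Tendsto (fun v => (1/π) * ((v - V)/D / (1 + ((v - V)/D) ^ 2) + arctan ((v - V)/D)))
      atTop (nhds ((1/π) * (0 + π/2))) :=
    ((aux_quot_tendsto_top.comp hwtop).add (hat.comp hwtop)).const_mul (1/π)
  have hB1 : Tendsto (fun v => (1/π) * ((v - V)/D / (1 + ((v - V)/D) ^ 2) + arctan ((v - V)/D)))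
      atBot (nhds ((1/π) * (0 + -(π/2)))) :=
    ((aux_quot_tendsto_bot.comp hwbot).add (hab.comp hwbot)).const_mul (1/π)
  have hI1 : ∫ v, g v = 1 := by
    rw [integral_of_hasDerivAt_of_tendsto hF1 hgint hB1 hT1]
    field_simp
    ring
  -- ∫ (v-V) g = 0
  have hF2 : ∀ v : ℝ, HasDerivAt
      (fun v => -(D/π) * (1 + ((v - V)/D) ^ 2)⁻¹) ((v - V) * g v) v := by
    intro v
    have h := ((aux_inv_deriv ((v - V)/D)).comp v (hu v)).const_mul (-(D/π))
    refine h.congr_deriv ?_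
    rw [hg v]
    have := hden v
    field_simp
  have hT2 : Tendsto (fun v => -(D/π) * (1 + ((v - V)/D) ^ 2)⁻¹) atTop (nhds (-(D/π) * 0)) :=
    ((aux_sq_tendsto_top.comp hwtop).inv_tendsto_atTop).const_mul (-(D/π))
  have hB2 : Tendsto (fun v => -(D/π) * (1 + ((v - V)/D) ^ 2)⁻¹) atBot (nhds (-(D/π) * 0)) :=
    ((aux_sq_tendsto_bot.comp hwbot).inv_tendsto_atTop).const_mul (-(D/π))
  have hI2 : ∫ v, (v - V) * g v = 0 := by
    rw [integral_of_hasDerivAt_of_tendsto hF2 hvint hB2 hT2]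
    ring
  -- ∫ (v-V)^2 g = D^2
  have hF3 : ∀ v : ℝ, HasDerivAt
      (fun v => (D^2/π) * (arctan ((v - V)/D) - (v - V)/D / (1 + ((v - V)/D) ^ 2)))
      ((v - V) ^ 2 * g v) v := by
    intro v
    have h := (((Real.hasDerivAt_arctan ((v - V)/D)).comp v (hu v)).sub
      ((aux_quot_deriv ((v - V)/D)).comp v (hu v))).const_mul (D^2/π)
    refine h.congr_deriv ?_
    rw [hg v]
    have := hden v
    field_simp
    ring
  have hT3 : Tendsto (fun v => (D^2/π) * (arctan ((v - V)/D) - (v - V)/D / (1 + ((v - V)/D) ^ 2)))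
      atTop (nhds ((D^2/π) * (π/2 - 0))) :=
    ((hat.comp hwtop).sub (aux_quot_tendsto_top.comp hwtop)).const_mul (D^2/π)
  have hB3 : Tendsto (fun v => (D^2/π) * (arctan ((v - V)/D) - (v - V)/D / (1 + ((v - V)/D) ^ 2)))
      atBot (nhds ((D^2/π) * (-(π/2) - 0))) :=
    ((hab.comp hwbot).sub (aux_quot_tendsto_bot.comp hwbot)).const_mul (D^2/π)
  have hI3 : ∫ v, (v - V) ^ 2 * g v = D ^ 2 := by
    rw [integral_of_hasDerivAt_of_tendsto hF3 hv2int hB3 hT3]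
    field_simp
    ring
  have hmean : ∫ v, v * g v = V := by
    have hdecomp : (fun v => v * g v) = fun v => (v - V) * g v + V * g v :=
      funext fun v => by ring
    rw [hdecomp, integral_add hvint (hgint.const_mul V), hI2, integral_const_mul, hI1]
    ring
  exact ⟨hg0, hgint, hI1, hmean, hI3⟩
end

section
/- The probability density g_∞(v) = 2/(π D [1 + ((v−V)/D)²]²) solves the stationary Fokker–Planck equation (1/2) d/dv [((V − v)² + D²) g_∞(v)] − (V − v) g_∞(v) = 0 on ℝ. -/
open MeasureTheory Real

/-- g_∞ solves the stationary Fokker–Planck equation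
(1/2) d/dv[((V−v)² + D²) g_∞] − (V−v) g_∞ = 0, i.e. the derivative of
((V−v)² + D²) g_∞ at v equals 2(V−v) g_∞(v). -/
theorem stmt_10
    (V D : ℝ) (hD : 0 < D)
    (g : ℝ → ℝ)
    (hg : ∀ v, g v = 2 / (π * D * (1 + ((v - V) / D) ^ 2) ^ 2)) :
    ∀ v : ℝ, HasDerivAt (fun w => ((V - w) ^ 2 + D ^ 2) * g w)
      (2 * ((V - v) * g v)) v := by
  intro v
  have hπ : (0:ℝ) < π := Real.pi_pos
  have hden : ∀ w : ℝ, (0:ℝ) < (w - V) ^ 2 + D ^ 2 := fun w => by positivity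
  have hfun : (fun w => ((V - w) ^ 2 + D ^ 2) * g w)
      = fun w => 2 * D ^ 3 / (π * ((w - V) ^ 2 + D ^ 2)) := by
    funext w
    rw [hg w]
    have h1 : (1 + ((w - V) / D) ^ 2) = ((w - V) ^ 2 + D ^ 2) / D ^ 2 := by
      field_simp; ring
    rw [h1]
    have := (hden w).ne'
    field_simp
    ring
  rw [hfun]
  have hq : HasDerivAt (fun w : ℝ => π * ((w - V) ^ 2 + D ^ 2))
      (π * (2 * (v - V))) v := by
    have h2 : HasDerivAt (fun w : ℝ => (w - V) ^ 2 + D ^ 2) (2 * (v - V)) v := by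
      have := ((hasDerivAt_id v).sub_const V).pow 2
      simpa using this.add_const (D ^ 2)
    simpa using h2.const_mul π
  have hqne : π * ((v - V) ^ 2 + D ^ 2) ≠ 0 := by positivity
  have hd : HasDerivAt (fun w => 2 * D ^ 3 / (π * ((w - V) ^ 2 + D ^ 2)))
      ((0 * (π * ((v - V) ^ 2 + D ^ 2)) - 2 * D ^ 3 * (π * (2 * (v - V)))) / (π * ((v - V) ^ 2 + D ^ 2)) ^ 2) v :=
    (hasDerivAt_const v (2 * D ^ 3)).div hq hqne
  convert hd using 1
  rw [hg v]
  have h1 : (1 + ((v - V) / D) ^ 2) = ((v - V) ^ 2 + D ^ 2) / D ^ 2 := by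
    field_simp; ring
  rw [h1]
  have := (hden v).ne'
  field_simp
  ring
end

section
/- For m ∈ ℝ and σ > 0, the density g_∞(v) = 2σ³ / (π[(v−m)² + σ²]²) is the unique probability-density solution of the stationary equation (1/2) d/dv [((v−m)² + σ²) g] − (m−v) g = 0, and it has mean m and variance σ². -/
open MeasureTheory Real Filter Topology

lemma aux_int_inv {σ : ℝ} (hσ : 0 < σ) : Integrable fun u : ℝ => (u ^ 2 + σ ^ 2)⁻¹ := by
  have hc : 0 < min (σ ^ 2) 1 := lt_min (by positivity) one_pos
  refine (integrable_inv_one_add_sq.const_mul (min (σ ^ 2) 1)⁻¹).mono' ?_ ?_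
  · exact (Continuous.inv₀ (by continuity) fun u => by positivity).aestronglyMeasurable
  · filter_upwards with u
    have h1 : (0:ℝ) < u ^ 2 + σ ^ 2 := by positivity
    rw [norm_inv, Real.norm_eq_abs, abs_of_pos h1, ← mul_inv,
      inv_le_inv₀ h1 (by positivity)]
    nlinarith [min_le_left (σ ^ 2) 1, min_le_right (σ ^ 2) 1, sq_nonneg u]

lemma aux_int_invsq {σ : ℝ} (hσ : 0 < σ) :
    Integrable fun u : ℝ => ((u ^ 2 + σ ^ 2) ^ 2)⁻¹ := by
  refine ((aux_int_inv hσ).const_mul (σ ^ 2)⁻¹).mono' ?_ ?_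
  · exact (Continuous.inv₀ (by continuity) fun u => by positivity).aestronglyMeasurable
  · filter_upwards with u
    have h1 : (0:ℝ) < u ^ 2 + σ ^ 2 := by positivity
    rw [norm_inv, Real.norm_eq_abs, abs_of_pos (by positivity), ← mul_inv,
      inv_le_inv₀ (by positivity) (by positivity)]
    nlinarith

lemma aux_int_u {σ : ℝ} (hσ : 0 < σ) :
    Integrable fun u : ℝ => u * ((u ^ 2 + σ ^ 2) ^ 2)⁻¹ := by
  refine ((aux_int_inv hσ).const_mul (2 * σ)⁻¹).mono' ?_ ?_
  · exact (continuous_id.mul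
      (Continuous.inv₀ (by continuity) fun u => by positivity)).aestronglyMeasurable
  · filter_upwards with u
    have h1 : (0:ℝ) < u ^ 2 + σ ^ 2 := by positivity
    have key : 2 * σ * |u| ≤ u ^ 2 + σ ^ 2 := by
      nlinarith [sq_abs u, sq_nonneg (|u| - σ), abs_nonneg u]
    have lhs_eq : ‖u * ((u ^ 2 + σ ^ 2) ^ 2)⁻¹‖ = |u| / (u ^ 2 + σ ^ 2) ^ 2 := by
      rw [norm_mul, norm_inv, Real.norm_eq_abs, Real.norm_eq_abs,
        abs_of_pos (show (0:ℝ) < (u ^ 2 + σ ^ 2) ^ 2 by positivity), div_eq_mul_inv]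
    have rhs_eq : (2 * σ)⁻¹ * (u ^ 2 + σ ^ 2)⁻¹ = 1 / (2 * σ * (u ^ 2 + σ ^ 2)) := by
      rw [← mul_inv, inv_eq_one_div]
    rw [lhs_eq, rhs_eq, div_le_div_iff₀ (by positivity) (by positivity)]
    nlinarith [abs_nonneg u]

lemma aux_int_usq {σ : ℝ} (hσ : 0 < σ) :
    Integrable fun u : ℝ => u ^ 2 * ((u ^ 2 + σ ^ 2) ^ 2)⁻¹ := by
  refine (aux_int_inv hσ).mono' ?_ ?_
  · exact ((continuous_pow 2).mul
      (Continuous.inv₀ (by continuity) fun u => by positivity)).aestronglyMeasurable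
  · filter_upwards with u
    have h1 : (0:ℝ) < u ^ 2 + σ ^ 2 := by positivity
    have lhs_eq : ‖u ^ 2 * ((u ^ 2 + σ ^ 2) ^ 2)⁻¹‖ = u ^ 2 / (u ^ 2 + σ ^ 2) ^ 2 := by
      rw [norm_mul, norm_inv, Real.norm_eq_abs, Real.norm_eq_abs,
        abs_of_pos (show (0:ℝ) < (u ^ 2 + σ ^ 2) ^ 2 by positivity),
        abs_of_nonneg (sq_nonneg u), div_eq_mul_inv]
    rw [lhs_eq, inv_eq_one_div, div_le_div_iff₀ (by positivity) h1]
    nlinarith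

lemma aux_hasDerivAt_arctan {σ : ℝ} (hσ : 0 < σ) (u : ℝ) :
    HasDerivAt (fun u : ℝ => arctan (u / σ)) (σ / (u ^ 2 + σ ^ 2)) u := by
  have h := (Real.hasDerivAt_arctan (u / σ)).comp u ((hasDerivAt_id u).div_const σ)
  refine h.congr_deriv ?_
  have h1 : (0:ℝ) < u ^ 2 + σ ^ 2 := by positivity
  have h2 : (0:ℝ) < 1 + (u / σ) ^ 2 := by positivity
  field_simp
  ring

lemma aux_tendsto_udivq_top {σ : ℝ} (hσ : 0 < σ) :
    Tendsto (fun u : ℝ => u / (u ^ 2 + σ ^ 2)) atTop (𝓝 0) := by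
  refine squeeze_zero_norm' ?_ tendsto_inv_atTop_zero
  filter_upwards [eventually_ge_atTop 1] with u hu
  have h1 : (0:ℝ) < u ^ 2 + σ ^ 2 := by positivity
  rw [Real.norm_eq_abs, abs_div, abs_of_pos h1, abs_of_pos (by linarith), inv_eq_one_div,
    div_le_div_iff₀ h1 (by linarith)]
  nlinarith

lemma aux_tendsto_udivq_bot {σ : ℝ} (hσ : 0 < σ) :
    Tendsto (fun u : ℝ => u / (u ^ 2 + σ ^ 2)) atBot (𝓝 0) := by
  have h := ((aux_tendsto_udivq_top hσ).comp tendsto_neg_atBot_atTop).neg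
  rw [neg_zero] at h
  convert h using 2 with u
  simp [Function.comp, neg_div, neg_sq]

lemma aux_tendsto_arctan_top {σ : ℝ} (hσ : 0 < σ) :
    Tendsto (fun u : ℝ => arctan (u / σ)) atTop (𝓝 (π / 2)) :=
  (tendsto_nhds_of_tendsto_nhdsWithin tendsto_arctan_atTop).comp
    (Tendsto.atTop_div_const hσ tendsto_id)

lemma aux_tendsto_arctan_bot {σ : ℝ} (hσ : 0 < σ) :
    Tendsto (fun u : ℝ => arctan (u / σ)) atBot (𝓝 (-(π / 2))) :=
  (tendsto_nhds_of_tendsto_nhdsWithin tendsto_arctan_atBot).comp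
    (Tendsto.atBot_div_const hσ tendsto_id)

lemma aux_tendsto_invq_top {σ : ℝ} (hσ : 0 < σ) :
    Tendsto (fun u : ℝ => (u ^ 2 + σ ^ 2)⁻¹) atTop (𝓝 0) := by
  apply Tendsto.inv_tendsto_atTop
  exact tendsto_atTop_add_const_right _ _ (tendsto_pow_atTop two_ne_zero)

lemma aux_tendsto_invq_bot {σ : ℝ} (hσ : 0 < σ) :
    Tendsto (fun u : ℝ => (u ^ 2 + σ ^ 2)⁻¹) atBot (𝓝 0) := by
  have h := (aux_tendsto_invq_top hσ).comp tendsto_neg_atBot_atTop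
  convert h using 2 with u
  simp [Function.comp, neg_sq]

section
variable {σ : ℝ}

lemma aux_hasDerivAt_q (m v : ℝ) :
    HasDerivAt (fun w : ℝ => (w - m) ^ 2 + σ ^ 2) (2 * (v - m)) v := by
  have h := (((hasDerivAt_id v).sub_const m).pow 2).add_const (σ ^ 2)
  simpa using h

lemma aux_integral_invsq (hσ : 0 < σ) :
    ∫ u : ℝ, ((u ^ 2 + σ ^ 2) ^ 2)⁻¹ = π / (2 * σ ^ 3) := by
  have hderiv : ∀ u : ℝ, HasDerivAt
      (fun u : ℝ => (2 * σ ^ 3)⁻¹ * arctan (u / σ) + (2 * σ ^ 2)⁻¹ * (u / (u ^ 2 + σ ^ 2)))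
      (((u ^ 2 + σ ^ 2) ^ 2)⁻¹) u := by
    intro u
    have h0 : (0:ℝ) < u ^ 2 + σ ^ 2 := by positivity
    have h1 := (aux_hasDerivAt_arctan hσ u).const_mul (2 * σ ^ 3)⁻¹
    have hq : HasDerivAt (fun u : ℝ => u ^ 2 + σ ^ 2) (2 * u) u := by
      simpa using aux_hasDerivAt_q (σ := σ) 0 u
    have h2 := ((hasDerivAt_id u).div hq h0.ne').const_mul (2 * σ ^ 2)⁻¹
    refine (h1.add h2).congr_deriv ?_
    simp only [id]
    field_simp
    ring
  have htop := ((aux_tendsto_arctan_top hσ).const_mul (2 * σ ^ 3)⁻¹).add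
    ((aux_tendsto_udivq_top hσ).const_mul (2 * σ ^ 2)⁻¹)
  have hbot := ((aux_tendsto_arctan_bot hσ).const_mul (2 * σ ^ 3)⁻¹).add
    ((aux_tendsto_udivq_bot hσ).const_mul (2 * σ ^ 2)⁻¹)
  rw [MeasureTheory.integral_of_hasDerivAt_of_tendsto hderiv (aux_int_invsq hσ) hbot htop]
  field_simp
  ring

lemma aux_integral_u (hσ : 0 < σ) :
    ∫ u : ℝ, u * ((u ^ 2 + σ ^ 2) ^ 2)⁻¹ = 0 := by
  have hderiv : ∀ u : ℝ, HasDerivAt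
      (fun u : ℝ => -(2 : ℝ)⁻¹ * (u ^ 2 + σ ^ 2)⁻¹)
      (u * ((u ^ 2 + σ ^ 2) ^ 2)⁻¹) u := by
    intro u
    have h0 : (0:ℝ) < u ^ 2 + σ ^ 2 := by positivity
    have hq : HasDerivAt (fun u : ℝ => u ^ 2 + σ ^ 2) (2 * u) u := by
      simpa using aux_hasDerivAt_q (σ := σ) 0 u
    have h2 := (hq.inv h0.ne').const_mul (-(2 : ℝ)⁻¹)
    refine h2.congr_deriv ?_
    field_simp
  have htop := (aux_tendsto_invq_top hσ).const_mul (-(2 : ℝ)⁻¹)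
  have hbot := (aux_tendsto_invq_bot hσ).const_mul (-(2 : ℝ)⁻¹)
  rw [mul_zero] at htop hbot
  rw [MeasureTheory.integral_of_hasDerivAt_of_tendsto hderiv (aux_int_u hσ) hbot htop]
  ring

lemma aux_integral_usq (hσ : 0 < σ) :
    ∫ u : ℝ, u ^ 2 * ((u ^ 2 + σ ^ 2) ^ 2)⁻¹ = π / (2 * σ) := by
  have hderiv : ∀ u : ℝ, HasDerivAt
      (fun u : ℝ => (2 * σ)⁻¹ * arctan (u / σ) + -(2 : ℝ)⁻¹ * (u / (u ^ 2 + σ ^ 2)))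
      (u ^ 2 * ((u ^ 2 + σ ^ 2) ^ 2)⁻¹) u := by
    intro u
    have h0 : (0:ℝ) < u ^ 2 + σ ^ 2 := by positivity
    have h1 := (aux_hasDerivAt_arctan hσ u).const_mul (2 * σ)⁻¹
    have hq : HasDerivAt (fun u : ℝ => u ^ 2 + σ ^ 2) (2 * u) u := by
      simpa using aux_hasDerivAt_q (σ := σ) 0 u
    have h2 := ((hasDerivAt_id u).div hq h0.ne').const_mul (-(2 : ℝ)⁻¹)
    refine (h1.add h2).congr_deriv ?_
    simp only [id]
    field_simp
    ring
  have htop := ((aux_tendsto_arctan_top hσ).const_mul (2 * σ)⁻¹).add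
    ((aux_tendsto_udivq_top hσ).const_mul (-(2 : ℝ)⁻¹))
  have hbot := ((aux_tendsto_arctan_bot hσ).const_mul (2 * σ)⁻¹).add
    ((aux_tendsto_udivq_bot hσ).const_mul (-(2 : ℝ)⁻¹))
  rw [MeasureTheory.integral_of_hasDerivAt_of_tendsto hderiv (aux_int_usq hσ) hbot htop]
  field_simp
  ring

end

/-- g_∞(v) = 2σ³/(π[(v−m)²+σ²]²) is the unique probability-density solution of
(1/2) d/dv[((v−m)²+σ²)g] − (m−v)g = 0, with mean m and variance σ². -/
theorem stmt_14
    (m σ : ℝ) (hσ : 0 < σ)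
    (ginf : ℝ → ℝ)
    (hginf : ∀ v, ginf v = 2 * σ ^ 3 / (π * ((v - m) ^ 2 + σ ^ 2) ^ 2)) :
    (∀ v, 0 ≤ ginf v) ∧
    Integrable ginf ∧
    (∫ v, ginf v = 1) ∧
    -- ginf solves the stationary equation
    (∀ v : ℝ, HasDerivAt (fun w => ((w - m) ^ 2 + σ ^ 2) * ginf w)
      (2 * ((m - v) * ginf v)) v) ∧
    (∫ v, v * ginf v = m) ∧
    (∫ v, (v - m) ^ 2 * ginf v = σ ^ 2) ∧
    -- uniqueness among integrable solutions of unit mass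
    (∀ g : ℝ → ℝ, Integrable g → (∫ v, g v = 1) →
      (∀ v : ℝ, HasDerivAt (fun w => ((w - m) ^ 2 + σ ^ 2) * g w)
        (2 * ((m - v) * g v)) v) →
      g = ginf) := by
  have hπ : (0:ℝ) < π := Real.pi_pos
  have hg' : ∀ v, ginf v = 2 * σ ^ 3 / π * (((v - m) ^ 2 + σ ^ 2) ^ 2)⁻¹ := by
    intro v
    rw [hginf v, div_eq_mul_inv, div_eq_mul_inv, mul_inv]
    ring
  have hq0 : ∀ v : ℝ, (0:ℝ) < (v - m) ^ 2 + σ ^ 2 := fun v => by positivity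
  -- nonneg
  have h_nonneg : ∀ v, 0 ≤ ginf v := by
    intro v; rw [hginf v]; positivity
  -- integrable
  have h_int : Integrable ginf := by
    have h := ((aux_int_invsq hσ).comp_sub_right m).const_mul (2 * σ ^ 3 / π)
    exact h.congr (ae_of_all _ fun v => (hg' v).symm)
  -- integral one
  have h_shift_invsq : (∫ v : ℝ, (((v - m) ^ 2 + σ ^ 2) ^ 2)⁻¹) = π / (2 * σ ^ 3) := by
    rw [show (∫ v : ℝ, (((v - m) ^ 2 + σ ^ 2) ^ 2)⁻¹)
        = ∫ u : ℝ, ((u ^ 2 + σ ^ 2) ^ 2)⁻¹ from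
      integral_sub_right_eq_self (fun u : ℝ => ((u ^ 2 + σ ^ 2) ^ 2)⁻¹) m]
    exact aux_integral_invsq hσ
  have h_one : ∫ v, ginf v = 1 := by
    rw [integral_congr_ae (ae_of_all _ hg'), integral_const_mul, h_shift_invsq]
    field_simp
  -- stationary equation
  have h_ode : ∀ v : ℝ, HasDerivAt (fun w => ((w - m) ^ 2 + σ ^ 2) * ginf w)
      (2 * ((m - v) * ginf v)) v := by
    intro v
    have hq := aux_hasDerivAt_q (σ := σ) m v
    have h1 := (hq.inv (hq0 v).ne').const_mul (2 * σ ^ 3 / π)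
    refine (h1.congr_of_eventuallyEq (Filter.EventuallyEq.of_eq ?_)).congr_deriv ?_
    · funext w
      rw [hginf w]
      simp only [Pi.inv_apply]
      field_simp
    · rw [hginf v]
      field_simp
      ring
  -- mean
  have h_mean3 : (∫ v : ℝ, (v - m) * ginf v) = 0 := by
    have heq : ∀ v : ℝ, (v - m) * ginf v
        = 2 * σ ^ 3 / π * ((v - m) * ((((v - m)) ^ 2 + σ ^ 2) ^ 2)⁻¹) := by
      intro v; rw [hg' v]; ring
    rw [integral_congr_ae (ae_of_all _ heq), integral_const_mul,
      show (∫ v : ℝ, (v - m) * (((v - m) ^ 2 + σ ^ 2) ^ 2)⁻¹)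
          = ∫ u : ℝ, u * ((u ^ 2 + σ ^ 2) ^ 2)⁻¹ from
        integral_sub_right_eq_self (fun u : ℝ => u * ((u ^ 2 + σ ^ 2) ^ 2)⁻¹) m,
      aux_integral_u hσ, mul_zero]
  have h_int_shift : Integrable fun v => (v - m) * ginf v := by
    have h := ((aux_int_u hσ).comp_sub_right m).const_mul (2 * σ ^ 3 / π)
    apply h.congr (ae_of_all _ fun v => ?_)
    rw [hg' v]; ring
  have h_mean : ∫ v, v * ginf v = m := by
    have hsplit : ∀ v : ℝ, v * ginf v = (v - m) * ginf v + m * ginf v := fun v => by ring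
    rw [integral_congr_ae (ae_of_all _ hsplit),
      integral_add h_int_shift (h_int.const_mul m), h_mean3, integral_const_mul, h_one]
    ring
  -- variance
  have h_var : ∫ v, (v - m) ^ 2 * ginf v = σ ^ 2 := by
    have heq : ∀ v : ℝ, (v - m) ^ 2 * ginf v
        = 2 * σ ^ 3 / π * ((v - m) ^ 2 * ((((v - m)) ^ 2 + σ ^ 2) ^ 2)⁻¹) := by
      intro v; rw [hg' v]; ring
    rw [integral_congr_ae (ae_of_all _ heq), integral_const_mul,
      show (∫ v : ℝ, (v - m) ^ 2 * (((v - m) ^ 2 + σ ^ 2) ^ 2)⁻¹)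
          = ∫ u : ℝ, u ^ 2 * ((u ^ 2 + σ ^ 2) ^ 2)⁻¹ from
        integral_sub_right_eq_self (fun u : ℝ => u ^ 2 * ((u ^ 2 + σ ^ 2) ^ 2)⁻¹) m,
      aux_integral_usq hσ]
    field_simp
  refine ⟨h_nonneg, h_int, h_one, h_ode, h_mean, h_var, ?_⟩
  -- uniqueness
  intro g hgInt hg1 hgode
  set φ : ℝ → ℝ := fun v => ((v - m) ^ 2 + σ ^ 2) * (((v - m) ^ 2 + σ ^ 2) * g v) with hφ
  have hder : ∀ v, HasDerivAt φ 0 v := by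
    intro v
    have h := (aux_hasDerivAt_q (σ := σ) m v).mul (hgode v)
    refine h.congr_deriv ?_
    ring
  have hconst := is_const_of_deriv_eq_zero (𝕜 := ℝ)
    (fun v => (hder v).differentiableAt) (fun v => (hder v).deriv)
  have key : ∀ v, g v = σ ^ 4 * g m * (((v - m) ^ 2 + σ ^ 2) ^ 2)⁻¹ := by
    intro v
    have h := hconst v m
    simp only [hφ, sub_self] at h
    have h2 : ((v - m) ^ 2 + σ ^ 2) ^ 2 * g v = σ ^ 4 * g m := by
      rw [show ((v - m) ^ 2 + σ ^ 2) ^ 2 * g v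
          = ((v - m) ^ 2 + σ ^ 2) * (((v - m) ^ 2 + σ ^ 2) * g v) by ring, h]
      ring
    have h3 : (((v - m) ^ 2 + σ ^ 2) ^ 2) ≠ 0 := by positivity
    field_simp
    linarith [h2]
  have hC : σ ^ 4 * g m = 2 * σ ^ 3 / π := by
    have h1 : (1:ℝ) = σ ^ 4 * g m * (π / (2 * σ ^ 3)) := by
      rw [← hg1, integral_congr_ae (ae_of_all _ key), integral_const_mul, h_shift_invsq]
    field_simp at h1
    field_simp
    linarith
  funext v
  rw [key v, hC, hg' v]
end
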